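/- Let α ≥ 16 be even and define x_{k₀} for k₀ ∈ {4, …, α/2 − 1} as the lower essential polynomial values of a strictly increasing positive coefficient sequence (ξ_i). Then x_4 ≤ x_5 ≤ ⋯ ≤ x_{α/2−1}, all x_{k₀} > 0, and x_{k₀−1} = x_{k₀} if and only if k₀ is prime (for 5 ≤ k₀ ≤ α/2 − 1). -/
import Mathlib

namespace LEPM

open Finset

variable (ξ : ℕ → ℝ)

/-- ξ with the convention that indices ≤ 1 give 0. -/
noncomputable def Z (n : ℕ) : ℝ := if n ≤ 1 then 0 else ξ n

/-- successive differences of Z -/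
noncomputable def E (n : ℕ) : ℝ := Z ξ n - Z ξ (n - 1)

/-- closed form: half of the sum of E-products over the region under the hyperbola. -/
noncomputable def X (k : ℕ) : ℝ :=
  (1/2) * ∑ p ∈ (Finset.Ico 2 k ×ˢ Finset.Ico 2 k).filter (fun p => p.1 * p.2 ≤ k),
    E ξ p.1 * E ξ p.2

lemma Z_eq {n : ℕ} (hn : 2 ≤ n) : Z ξ n = ξ n := by
  simp [Z, show ¬ n ≤ 1 by omega]

lemma telescope (m : ℕ) : ∑ e ∈ Finset.Ico 2 (m + 1), E ξ e = Z ξ m := by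
  induction m with
  | zero => simp [Z]
  | succ m ih =>
    rcases Nat.lt_or_ge m 1 with h | h
    · interval_cases m
      simp [Z]
    · rw [Finset.sum_Ico_succ_top (by omega), ih]
      simp only [E, Nat.add_sub_cancel]
      ring

lemma E_pos (hpos : 0 < ξ 0) (hmono : StrictMono ξ) {n : ℕ} (hn : 2 ≤ n) :
    0 < E ξ n := by
  rcases Nat.lt_or_ge n 3 with h | h
  · interval_cases n
    have h2 : (0:ℝ) < ξ 2 := hpos.trans (hmono (by norm_num))
    simp only [E, Z]
    norm_num [h2]
  · have h1 : ¬ (n ≤ 1) := by omega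
    have h2 : ¬ (n - 1 ≤ 1) := by omega
    simp only [E, Z, if_neg h1, if_neg h2]
    have := hmono (show n - 1 < n by omega)
    linarith

/-- filtering an interval by the hyperbola condition (left factor fixed). -/
lemma filterL (k d a m : ℕ) (hd : 2 ≤ d) (hm : k / d + 1 ≤ m) :
    (Finset.Ico a m).filter (fun e => d * e ≤ k) = Finset.Ico a (k / d + 1) := by
  have hd0 : 0 < d := by omega
  ext e
  simp only [Finset.mem_filter, Finset.mem_Ico, Nat.lt_succ_iff]
  constructor
  · rintro ⟨⟨he2, _⟩, hde⟩
    refine ⟨he2, (Nat.le_div_iff_mul_le hd0).mpr ?_⟩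
    rw [mul_comm]; exact hde
  · rintro ⟨he2, hed⟩
    have h := (Nat.le_div_iff_mul_le hd0).mp hed
    refine ⟨⟨he2, by omega⟩, ?_⟩
    rw [mul_comm]; exact h

/-- filtering an interval by the hyperbola condition (right factor fixed). -/
lemma filterR (k d a m : ℕ) (hd : 2 ≤ d) (hm : k / d + 1 ≤ m) :
    (Finset.Ico a m).filter (fun e => e * d ≤ k) = Finset.Ico a (k / d + 1) := by
  rw [← filterL k d a m hd hm]
  apply Finset.filter_congr
  intro e _
  rw [mul_comm]

lemma X_eq_hyper (k : ℕ) (hk : 4 ≤ k) :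
    X ξ k = (∑ d ∈ Finset.Ico 2 (Nat.sqrt k + 1), E ξ d * ξ (k / d))
      - (1/2) * (ξ (Nat.sqrt k))^2 := by
  set s := Nat.sqrt k with hs
  have hs2 : 2 ≤ s := Nat.le_sqrt.mpr (by omega)
  have hss : s * s ≤ k := Nat.sqrt_le k
  have hlt : k < (s + 1) * (s + 1) := Nat.lt_succ_sqrt k
  have hsk : s + 1 ≤ k := by nlinarith
  have hdivge : ∀ d, 2 ≤ d → d ≤ s → s ≤ k / d := by
    intro d h2 hds
    exact (Nat.le_div_iff_mul_le (by omega)).mpr (le_trans (Nat.mul_le_mul le_rfl hds) hss)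
  have hdivle : ∀ d, s + 1 ≤ d → k / d ≤ s := by
    intro d hd
    by_contra hcon
    push_neg at hcon
    have h1 : (s+1) * (s+1) ≤ d * (k / d) := Nat.mul_le_mul hd hcon
    have h2 : d * (k / d) ≤ k := Nat.mul_div_le k d
    omega
  -- Step 1: X as iterated sum of ifs
  have step1 : X ξ k = (1/2) * ∑ d ∈ Finset.Ico 2 k, ∑ e ∈ Finset.Ico 2 k,
      (if d * e ≤ k then E ξ d * E ξ e else 0) := by
    rw [X, Finset.sum_filter, Finset.sum_product]
  -- Step 2: inner sums
  have step2 : ∀ d ∈ Finset.Ico 2 k, (∑ e ∈ Finset.Ico 2 k,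
      (if d * e ≤ k then E ξ d * E ξ e else 0)) = E ξ d * Z ξ (k / d) := by
    intro d hd
    rw [Finset.mem_Ico] at hd
    have hm : k / d + 1 ≤ k := by
      have := Nat.div_lt_self (show 0 < k by omega) (show 1 < d by omega)
      omega
    rw [← Finset.sum_filter, filterL k d 2 k hd.1 hm, ← Finset.mul_sum, telescope]
  rw [step1, Finset.sum_congr rfl step2]
  -- Step 4: split at s+1
  rw [← Finset.sum_Ico_consecutive _ (show 2 ≤ s + 1 by omega) hsk]
  -- Step 5: evaluate tail
  have step5 : ∑ d ∈ Finset.Ico (s+1) k, E ξ d * Z ξ (k / d)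
      = ∑ e ∈ Finset.Ico 2 (s+1), E ξ e * (Z ξ (k / e) - Z ξ s) := by
    have h51 : ∀ d ∈ Finset.Ico (s+1) k, E ξ d * Z ξ (k / d)
        = ∑ e ∈ Finset.Ico 2 (s+1), (if e * d ≤ k then E ξ d * E ξ e else 0) := by
      intro d hd
      rw [Finset.mem_Ico] at hd
      have hm : k / d + 1 ≤ s + 1 := by
        have := hdivle d hd.1
        omega
      rw [← Finset.sum_filter, filterR k d 2 (s+1) (by omega) hm, ← Finset.mul_sum,
        telescope]
    rw [Finset.sum_congr rfl h51, Finset.sum_comm]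
    apply Finset.sum_congr rfl
    intro e he
    rw [Finset.mem_Ico, Nat.lt_succ_iff] at he
    have hm : k / e + 1 ≤ k := by
      have := Nat.div_lt_self (show 0 < k by omega) (show 1 < e by omega)
      omega
    rw [← Finset.sum_filter, filterL k e (s+1) k he.1 hm]
    have hse : s + 1 ≤ k / e + 1 := by
      have := hdivge e he.1 he.2
      omega
    have hsplit := Finset.sum_Ico_consecutive (fun d => E ξ d * E ξ e)
      (show 2 ≤ s + 1 by omega) hse
    have htel : ∀ m : ℕ, ∑ d ∈ Finset.Ico 2 (m+1), (fun d => E ξ d * E ξ e) d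
        = Z ξ m * E ξ e := by
      intro m
      rw [← Finset.sum_mul, telescope]
    have h1 := htel (k / e)
    have h2 := htel s
    simp only at h1 h2 hsplit
    have : ∑ d ∈ Finset.Ico (s+1) (k/e+1), E ξ d * E ξ e
        = Z ξ (k/e) * E ξ e - Z ξ s * E ξ e := by
      rw [← h1, ← h2, ← hsplit]; ring
    rw [this]; ring
  rw [step5]
  -- Step 6: combine
  have hZs : ∑ e ∈ Finset.Ico 2 (s+1), E ξ e = Z ξ s := telescope ξ s
  have hZξ : ∀ d ∈ Finset.Ico 2 (s+1), E ξ d * Z ξ (k/d) = E ξ d * ξ (k/d) := by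
    intro d hd
    rw [Finset.mem_Ico, Nat.lt_succ_iff] at hd
    rw [Z_eq ξ (le_trans hs2 (hdivge d hd.1 hd.2))]
  have hexp : ∑ e ∈ Finset.Ico 2 (s+1), E ξ e * (Z ξ (k / e) - Z ξ s)
      = (∑ e ∈ Finset.Ico 2 (s+1), E ξ e * Z ξ (k/e)) - Z ξ s * Z ξ s := by
    rw [← hZs, Finset.sum_mul, ← Finset.sum_sub_distrib]
    apply Finset.sum_congr rfl
    intro e _
    ring
  rw [hexp, Finset.sum_congr rfl hZξ, Z_eq ξ hs2]
  ring

/-- Abel summation to match the definition of x. -/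
lemma abel (g : ℕ → ℝ) (s : ℕ) (hs : 2 ≤ s) :
    ∑ d ∈ Finset.Ico 2 (s + 1), E ξ d * g d
      = (∑ n ∈ Finset.Ico 2 s, ξ n * (g n - g (n + 1))) + ξ s * g s := by
  induction s, hs using Nat.le_induction with
  | base =>
    rw [show Finset.Ico 2 (2+1) = {2} from rfl, Finset.sum_singleton,
      show Finset.Ico 2 2 = ∅ from rfl, Finset.sum_empty]
    simp only [E, Z]
    norm_num
  | succ s hs ih =>
    rw [Finset.sum_Ico_succ_top (show 2 ≤ s + 1 by omega), ih,
      Finset.sum_Ico_succ_top (show 2 ≤ s by omega)]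
    have hE : E ξ (s+1) = ξ (s+1) - ξ s := by
      simp only [E, Z, Nat.add_sub_cancel]
      rw [if_neg (by omega), if_neg (by omega)]
    rw [hE]
    ring

/-- the difference of consecutive X values. -/
lemma X_diff (k : ℕ) (hk : 5 ≤ k) :
    X ξ k = X ξ (k-1) + (1/2) * ∑ p ∈ (Finset.Ico 2 k ×ˢ Finset.Ico 2 k).filter
      (fun p => p.1 * p.2 = k), E ξ p.1 * E ξ p.2 := by
  have hamb : (Finset.Ico 2 (k-1) ×ˢ Finset.Ico 2 (k-1)).filter (fun p => p.1 * p.2 ≤ k-1)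
      = (Finset.Ico 2 k ×ˢ Finset.Ico 2 k).filter (fun p => p.1 * p.2 ≤ k-1) := by
    ext p
    simp only [Finset.mem_filter, Finset.mem_product, Finset.mem_Ico]
    constructor
    · rintro ⟨⟨⟨h1, h1'⟩, ⟨h2, h2'⟩⟩, h3⟩
      exact ⟨⟨⟨h1, by omega⟩, ⟨h2, by omega⟩⟩, h3⟩
    · rintro ⟨⟨⟨h1, h1'⟩, ⟨h2, h2'⟩⟩, h3⟩
      have ha : p.1 * 2 ≤ p.1 * p.2 := Nat.mul_le_mul le_rfl h2
      have hb : 2 * p.2 ≤ p.1 * p.2 := Nat.mul_le_mul h1 le_rfl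
      exact ⟨⟨⟨h1, by omega⟩, ⟨h2, by omega⟩⟩, h3⟩
  have hsplit : (Finset.Ico 2 k ×ˢ Finset.Ico 2 k).filter (fun p => p.1 * p.2 ≤ k)
      = (Finset.Ico 2 k ×ˢ Finset.Ico 2 k).filter (fun p => p.1 * p.2 ≤ k-1)
        ∪ (Finset.Ico 2 k ×ˢ Finset.Ico 2 k).filter (fun p => p.1 * p.2 = k) := by
    rw [← Finset.filter_or]
    apply Finset.filter_congr
    intro p _
    constructor
    · intro h; omega
    · intro h; omega
  have hdisj : Disjoint
      ((Finset.Ico 2 k ×ˢ Finset.Ico 2 k).filter (fun p => p.1 * p.2 ≤ k-1))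
      ((Finset.Ico 2 k ×ˢ Finset.Ico 2 k).filter (fun p => p.1 * p.2 = k)) := by
    rw [Finset.disjoint_left]
    intro p hp hp2
    simp only [Finset.mem_filter] at hp hp2
    omega
  rw [X, X, hamb, hsplit, Finset.sum_union hdisj]
  ring

lemma divisor_empty_iff (k : ℕ) (hk : 2 ≤ k) :
    (Finset.Ico 2 k ×ˢ Finset.Ico 2 k).filter (fun p => p.1 * p.2 = k) = ∅
      ↔ Nat.Prime k := by
  constructor
  · intro h
    by_contra hnp
    obtain ⟨m, hmdvd, hm2, hmlt⟩ := Nat.exists_dvd_of_not_prime2 hk hnp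
    obtain ⟨e, he⟩ := hmdvd
    have h2 : 2 ≤ e := by
      rcases e with _ | _ | e
      · rw [Nat.mul_zero] at he; omega
      · rw [Nat.mul_one] at he; omega
      · omega
    have helt : e < k := by
      have h2e : 2 * e ≤ m * e := Nat.mul_le_mul hm2 le_rfl
      omega
    have hmem : (m, e) ∈ (Finset.Ico 2 k ×ˢ Finset.Ico 2 k).filter
        (fun p => p.1 * p.2 = k) := by
      simp only [Finset.mem_filter, Finset.mem_product, Finset.mem_Ico]
      exact ⟨⟨⟨hm2, hmlt⟩, ⟨h2, helt⟩⟩, he.symm⟩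
    rw [h] at hmem
    exact absurd hmem (Finset.notMem_empty _)
  · intro hp
    rw [Finset.eq_empty_iff_forall_notMem]
    rintro ⟨a, b⟩ hmem
    simp only [Finset.mem_filter, Finset.mem_product, Finset.mem_Ico] at hmem
    obtain ⟨⟨⟨ha2, hak⟩, ⟨hb2, hbk⟩⟩, hab⟩ := hmem
    rcases hp.eq_one_or_self_of_dvd a ⟨b, hab.symm⟩ with h | h <;> omega

end LEPM

/-- For even α ≥ 16 and strictly increasing positive coefficients ξ, the lower
essential polynomial values x_{k₀} satisfy 0 < x₄ ≤ x₅ ≤ ⋯ ≤ x_{α/2−1}, with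
x_{k₀−1} = x_{k₀} iff k₀ is prime. -/
theorem lower_essential_polynomial_monotone
    (α : ℕ) (hα_even : Even α) (hα : 16 ≤ α)
    (ξ : ℕ → ℝ) (hpos : 0 < ξ 0) (hmono : StrictMono ξ)
    (x : ℕ → ℝ)
    (hx : ∀ k₀ : ℕ, x k₀ =
      (∑ n ∈ Finset.Ico 2 (Nat.sqrt k₀), ξ n * (ξ (k₀ / n) - ξ (k₀ / (n + 1)))) +
      (if Nat.sqrt k₀ = k₀ / Nat.sqrt k₀ then (1/2) * ξ (Nat.sqrt k₀) ^ 2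
       else ξ (Nat.sqrt k₀) * (ξ (k₀ / Nat.sqrt k₀) - (1/2) * ξ (Nat.sqrt k₀)))) :
    (∀ k₀ : ℕ, 4 ≤ k₀ → k₀ ≤ α / 2 - 1 → 0 < x k₀) ∧
    (∀ k₀ : ℕ, 5 ≤ k₀ → k₀ ≤ α / 2 - 1 →
      x (k₀ - 1) ≤ x k₀ ∧ (x (k₀ - 1) = x k₀ ↔ Nat.Prime k₀)) := by
  -- x agrees with the closed form X
  have hxX : ∀ k, 4 ≤ k → x k = LEPM.X ξ k := by
    intro k hk
    have hs2 : 2 ≤ Nat.sqrt k := Nat.le_sqrt.mpr (by omega)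
    rw [LEPM.X_eq_hyper ξ k hk, LEPM.abel ξ (fun d => ξ (k / d)) (Nat.sqrt k) hs2, hx k]
    by_cases hcase : Nat.sqrt k = k / Nat.sqrt k
    · rw [if_pos hcase, ← hcase]
      ring
    · rw [if_neg hcase]
      ring
  -- difference facts
  have hdiff : ∀ k, 5 ≤ k → x (k-1) ≤ x k ∧ (x (k-1) = x k ↔ Nat.Prime k) := by
    intro k hk
    have hX := LEPM.X_diff ξ k hk
    have hx1 : x (k-1) = LEPM.X ξ (k-1) := hxX (k-1) (by omega)
    have hx2 : x k = LEPM.X ξ k := hxX k (by omega)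
    set D := (Finset.Ico 2 k ×ˢ Finset.Ico 2 k).filter (fun p => p.1 * p.2 = k) with hD
    have hterm : ∀ p ∈ D, 0 < LEPM.E ξ p.1 * LEPM.E ξ p.2 := by
      intro p hp
      rw [hD, Finset.mem_filter, Finset.mem_product, Finset.mem_Ico, Finset.mem_Ico] at hp
      exact mul_pos (LEPM.E_pos ξ hpos hmono hp.1.1.1) (LEPM.E_pos ξ hpos hmono hp.1.2.1)
    have hnonneg : 0 ≤ ∑ p ∈ D, LEPM.E ξ p.1 * LEPM.E ξ p.2 :=
      Finset.sum_nonneg fun p hp => le_of_lt (hterm p hp)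
    constructor
    · rw [hx1, hx2, hX]
      linarith
    · rw [hx1, hx2, hX, ← LEPM.divisor_empty_iff k (by omega), ← hD]
      constructor
      · intro heq
        have hzero : ∑ p ∈ D, LEPM.E ξ p.1 * LEPM.E ξ p.2 = 0 := by linarith
        by_contra hne
        have hne' : D.Nonempty := Finset.nonempty_iff_ne_empty.mpr hne
        have := Finset.sum_pos hterm hne'
        linarith
      · intro hempty
        rw [hempty, Finset.sum_empty]
        ring
  -- positivity
  have hpos4 : 0 < x 4 := by
    rw [hx 4]
    have h1 : Nat.sqrt 4 = 2 := by norm_num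
    rw [h1]
    norm_num
    have : (0:ℝ) < ξ 2 := hpos.trans (hmono (by norm_num))
    positivity
  have hposall : ∀ k, 4 ≤ k → 0 < x k := by
    intro k hk
    induction k, hk using Nat.le_induction with
    | base => exact hpos4
    | succ k hk ih =>
      have h := (hdiff (k+1) (by omega)).1
      simp only [Nat.add_sub_cancel] at h
      linarith
  exact ⟨fun k hk _ => hposall k hk, fun k hk _ => hdiff k hk⟩
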